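/- Let k be an algebraically closed field, A a finite-dimensional k-algebra, S_0 a set of isomorphism classes of simple right A-modules, and let S_x and S_y be simple right A-modules whose isomorphism classes do not lie in S_0. Let U_x be the largest submodule of the injective hull of S_x such that soc(U_x) ≅ S_x and every composition factor of U_x/soc(U_x) lies in S_0 (such a largest submodule exists and is unique), and define U_y analogously. Then Hom_A(U_x, U_y) = 0 if S_x ≇ S_y, while dim_k End_A(U_x) = 1; in particular every nonzero endomorphism of U_x is an isomorphism. -/

import Mathlib

open CategoryTheory Limits DerivedCategory Pretriangulated

noncomputable section
namespace PervSL2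


/-- The category of right `A`-modules (as modules over `Aᵐᵒᵖ`). -/
abbrev Mod (A : Type) [Ring A] := ModuleCat.{0} Aᵐᵒᵖ

noncomputable instance (R : Type) [Ring R] : HasDerivedCategory.{1} (ModuleCat.{0} R) :=
  HasDerivedCategory.standard _

/-- A finite-dimensional algebra `A` over `k` is symmetric if it admits a `k`-linear form
`l` with `l (a * b) = l (b * a)` whose kernel contains no nonzero one-sided ideal. -/
def IsSymmetricAlg (k A : Type) [Field k] [Ring A] [Algebra k A] : Prop :=
  ∃ l : A →ₗ[k] k, (∀ a b : A, l (a * b) = l (b * a)) ∧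
    (∀ I : Submodule A A, (∀ x ∈ I, l x = 0) → I = ⊥) ∧
    (∀ I : Submodule Aᵐᵒᵖ A, (∀ x ∈ I, l x = 0) → I = ⊥)

/-- The socle of a module: the sum of all simple (= atomic) submodules. -/
def socle (R : Type) [Ring R] (M : Type) [AddCommGroup M] [Module R M] : Submodule R M :=
  sSup {N : Submodule R M | IsAtom N}

/-- The radical of a module: the intersection of all maximal submodules. -/
def radical (R : Type) [Ring R] (M : Type) [AddCommGroup M] [Module R M] : Submodule R M :=
  sInf {N : Submodule R M | IsCoatom N}

/-- The top (head) of a module: the quotient by its radical. -/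
abbrev headOf (R : Type) [Ring R] (M : Type) [AddCommGroup M] [Module R M] : Type :=
  M ⧸ radical R M

/-- Every simple subquotient of `M` is isomorphic to (the underlying module of) a member
of the family `𝒯`.  This formalizes "all composition factors of `M` lie in `𝒯`". -/
def AllCompFactorsIn (R : Type) [Ring R] (M : Type) [AddCommGroup M] [Module R M]
    (𝒯 : Set (ModuleCat.{0} R)) : Prop :=
  ∀ (N : Submodule R M) (P : Submodule R N), IsSimpleModule R (↥N ⧸ P) →
    ∃ T ∈ 𝒯, Nonempty ((↥N ⧸ P) ≃ₗ[R] ↥T)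

/-- `P` (projective) together with an essential epimorphism onto `M` is a projective
cover of `M`. -/
def IsProjectiveCover (R : Type) [Ring R] (P : Type) [AddCommGroup P] [Module R P]
    (M : Type) [AddCommGroup M] [Module R M] (f : P →ₗ[R] M) : Prop :=
  Module.Projective R P ∧ Function.Surjective f ∧
    ∀ N : Submodule R P, Submodule.map f N = ⊤ → N = ⊤

/-- `I` (injective) together with an essential monomorphism from `M` is an injective
hull of `M`. -/
def IsInjectiveHull (R : Type) [Ring R] (I : Type) [AddCommGroup I] [Module R I]
    (M : Type) [AddCommGroup M] [Module R M] (f : M →ₗ[R] I) : Prop :=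
  Module.Injective R I ∧ Function.Injective f ∧
    ∀ N : Submodule R I, N ⊓ LinearMap.range f = ⊥ → N = ⊥

/-- Scalar multiplication by `c : k` on a right `A`-module, for a `k`-algebra `A`;
this is `A`-linear since the image of `k` is central. -/
def centralSmul (k : Type) [CommRing k] {A : Type} [Ring A] [Algebra k A]
    (c : k) (M : Type) [AddCommGroup M] [Module Aᵐᵒᵖ M] : M →ₗ[Aᵐᵒᵖ] M where
  toFun m := algebraMap k Aᵐᵒᵖ c • m
  map_add' := smul_add _
  map_smul' a m := by
    simp only [RingHom.id_apply]
    rw [← mul_smul, ← mul_smul, Algebra.commutes]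

lemma simpleModuleFinite {R M : Type} [Ring R] [AddCommGroup M] [Module R M]
    (h : IsSimpleModule R M) : Module.Finite R M := by
  haveI := h
  haveI : Nontrivial M := IsSimpleModule.nontrivial R M
  obtain ⟨x, hx⟩ := exists_ne (0 : M)
  have hsp : Submodule.span R ({x} : Set M) = ⊤ := by
    rcases eq_bot_or_eq_top (Submodule.span R ({x} : Set M)) with h' | h'
    · exact absurd (Submodule.span_singleton_eq_bot.mp h') hx
    · exact h'
  exact ⟨⟨{x}, by simpa using hsp⟩⟩

lemma finite_of_isZero {A : Type} [Ring A] (M : Mod A) (h : IsZero M) :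
    Module.Finite Aᵐᵒᵖ M := by
  haveI : Subsingleton M := by
    have h0 : (𝟙 M : M ⟶ M).hom = 0 := by rw [h.eq_zero_of_src (𝟙 M), ModuleCat.hom_zero]
    constructor
    intro a b
    have ha := congrFun (congrArg (fun f : M →ₗ[Aᵐᵒᵖ] M => (f : M → M)) h0) a
    have hb := congrFun (congrArg (fun f : M →ₗ[Aᵐᵒᵖ] M => (f : M → M)) h0) b
    simp only [LinearMap.zero_apply] at ha hb
    calc a = (𝟙 M : M ⟶ M).hom a := rfl
    _ = 0 := ha
    _ = (𝟙 M : M ⟶ M).hom b := hb.symm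
    _ = b := rfl
  infer_instance

lemma noetherianRing_op (k A : Type) [Field k] [Ring A] [Algebra k A]
    [FiniteDimensional k A] : IsNoetherianRing Aᵐᵒᵖ := by
  haveI : IsNoetherian k Aᵐᵒᵖ := isNoetherian_of_linearEquiv (MulOpposite.opLinearEquiv k)
  exact isNoetherian_of_tower k inferInstance

lemma finite_submodule (k : Type) [Field k] {A : Type} [Ring A] [Algebra k A]
    [FiniteDimensional k A] {M : Type} [AddCommGroup M] [Module Aᵐᵒᵖ M]
    (hM : Module.Finite Aᵐᵒᵖ M) (U : Submodule Aᵐᵒᵖ M) : Module.Finite Aᵐᵒᵖ U := by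
  haveI := hM
  haveI := noetherianRing_op k A
  haveI : IsNoetherian Aᵐᵒᵖ M := isNoetherian_of_isNoetherianRing_of_finite Aᵐᵒᵖ M
  exact Module.Finite.iff_fg.mpr (IsNoetherian.noetherian U)

lemma finite_quotient {A : Type} [Ring A] {M : Type} [AddCommGroup M] [Module Aᵐᵒᵖ M]
    (hM : Module.Finite Aᵐᵒᵖ M) (N : Submodule Aᵐᵒᵖ M) : Module.Finite Aᵐᵒᵖ (M ⧸ N) := by
  haveI := hM
  exact Module.Finite.of_surjective N.mkQ (Submodule.mkQ_surjective N)

/-- A complete set of pairwise non-isomorphic representatives of the simple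
right modules. -/
structure SimplesFamily (R : Type) [Ring R] (Z : Type) where
  S : Z → ModuleCat.{0} R
  simple : ∀ z, IsSimpleModule R (S z)
  nonIso : ∀ y z : Z, Nonempty ((S y : Type) ≃ₗ[R] (S z : Type)) → y = z
  complete : ∀ (M : Type) (_ : AddCommGroup M) (_ : Module R M),
    IsSimpleModule R M → ∃ z, Nonempty (M ≃ₗ[R] (S z : Type))

lemma SimplesFamily.fin {R : Type} [Ring R] {Z : Type} (SF : SimplesFamily R Z) (z : Z) :
    Module.Finite R (SF.S z) :=
  simpleModuleFinite (SF.simple z)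





variable (A : Type) [Ring A]

/-- The defining property of the bounded derived category of finitely generated right
`A`-modules inside the derived category of all right `A`-modules: bounded homology, all
homology finitely generated. -/
def DbProp (X : DerivedCategory (Mod A)) : Prop :=
  (∃ b : ℕ, ∀ n : ℤ, (b : ℤ) < |n| → IsZero ((homologyFunctor (Mod A) n).obj X)) ∧
  (∀ n : ℤ, Module.Finite Aᵐᵒᵖ ((homologyFunctor (Mod A) n).obj X))

/-- The bounded derived category of finitely generated right `A`-modules. -/
def Db := ObjectProperty.FullSubcategory (DbProp A)

instance : Category (Db A) := ObjectProperty.FullSubcategory.category _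

/-- The homology shift isomorphism in the derived category. -/
def homologyShiftIso (X : DerivedCategory (Mod A)) (n a : ℤ) :
    (homologyFunctor (Mod A) a).obj (X⟦n⟧) ≅ (homologyFunctor (Mod A) (n + a)).obj X :=
  ((homologyFunctor (Mod A) 0).shiftIso n a (n + a) rfl).app X

/-- The shift on the bounded derived category. -/
def DbShift (X : Db A) (n : ℤ) : Db A where
  obj := X.obj⟦n⟧
  property := by
    obtain ⟨⟨b, hb⟩, hfin⟩ := X.property
    constructor
    · refine ⟨b + n.natAbs, fun m hm => ?_⟩
      refine IsZero.of_iso ?_ (homologyShiftIso A X.obj n m)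
      refine hb (n + m) ?_
      have h1 : |m| ≤ |n + m| + |n| := by
        calc |m| = |n + m + -n| := by ring_nf
        _ ≤ |n + m| + |(-n)| := abs_add_le _ _
        _ = |n + m| + |n| := by rw [abs_neg]
      have h2 : (n.natAbs : ℤ) = |n| := Int.abs_eq_natAbs n ▸ rfl
      push_cast at hm
      omega
    · intro m
      haveI := hfin (n + m)
      exact Module.Finite.equiv (homologyShiftIso A X.obj n m).toLinearEquiv.symm

/-- The comparison between the single (stalk) functor to the derived category and the
homology of single complexes. -/
def singleHomologyIso (M : Mod A) (d m : ℤ) :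
    (homologyFunctor (Mod A) m).obj ((singleFunctor (Mod A) d).obj M) ≅
      ((CochainComplex.singleFunctor (Mod A) d).obj M).homology m :=
  (homologyFunctor (Mod A) m).mapIso
      (((SingleFunctors.evaluation _ _ d).mapIso (singleFunctorsPostcompQIso (Mod A))).app M) ≪≫
    (homologyFunctorFactors (Mod A) m).app _

/-- The stalk complex of a finitely generated module `M`, concentrated in degree `d`, as an
object of the bounded derived category `Db A`. -/
def DbSingle (M : Mod A) (hM : Module.Finite Aᵐᵒᵖ M) (d : ℤ) : Db A where
  obj := (singleFunctor (Mod A) d).obj M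
  property := by
    constructor
    · refine ⟨d.natAbs, fun m hm => ?_⟩
      refine IsZero.of_iso ?_ (singleHomologyIso A M d m)
      refine HomologicalComplex.isZero_single_obj_homology _ _ _ _ ?_
      intro h
      subst h
      have h2 : (m.natAbs : ℤ) = |m| := Int.abs_eq_natAbs m ▸ rfl
      omega
    · intro m
      by_cases h : m = d
      · subst h
        haveI := hM
        exact Module.Finite.equiv
          ((singleHomologyIso A M m m).trans
            (HomologicalComplex.singleObjHomologySelfIso _ _ _)).toLinearEquiv.symm
      · refine finite_of_isZero _ (IsZero.of_iso ?_ (singleHomologyIso A M d m))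
        exact HomologicalComplex.isZero_single_obj_homology _ _ _ _ h

variable {A} in
/-- An equivalence on bounded derived categories commuting with shifts (this is the part of
being a triangulated functor we keep track of). -/
def PreservesShift {B : Type} [Ring B] (F : Db A ⥤ Db B) : Prop :=
  ∀ (X : Db A) (n : ℤ), Nonempty (F.obj (DbShift A X n) ≅ DbShift B (F.obj X) n)

/-- The union of the pieces of a filtration strictly below level `i`. -/
def below {Z : Type} (𝒮 : ℕ → Set Z) (i : ℕ) : Set Z := ⋃ j < i, 𝒮 j



-- fg module category and Morita equivalence
def fgMod (R : Type) [Ring R] :=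
  ObjectProperty.FullSubcategory (fun M : ModuleCat.{0} R => Module.Finite R M)

instance (R : Type) [Ring R] : Category (fgMod R) := ObjectProperty.FullSubcategory.category _
instance (R : Type) [Ring R] : Preadditive (fgMod R) := Preadditive.fullSubcategory _

/-- Morita equivalence of `R` and `S`: an additive equivalence between the categories of
finitely generated right modules. -/
def MoritaEquiv (R S : Type) [Ring R] [Ring S] : Prop :=
  ∃ F : fgMod Rᵐᵒᵖ ≌ fgMod Sᵐᵒᵖ, F.functor.Additive

-- homotopy category of cochain complexes of right A-modules
variable (A : Type) [Ring A]

abbrev Kq : CochainComplex (Mod A) ℤ ⥤ HomotopyCategory (Mod A) (ComplexShape.up ℤ) :=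
  HomotopyCategory.quotient (Mod A) (ComplexShape.up ℤ)

/-- `T` is a tilting complex over `A`: a bounded complex of finitely generated projective
right `A`-modules with no nonzero self-`Hom`s in the homotopy category in nonzero shifts,
which generates the bounded homotopy category of finitely generated projectives as a
thick (triangulated, closed under retracts) subcategory. -/
def IsTiltingComplex (T : CochainComplex (Mod A) ℤ) : Prop :=
  (∃ b : ℕ, ∀ n : ℤ, (b : ℤ) < |n| → IsZero (T.X n)) ∧
  (∀ n : ℤ, Module.Projective Aᵐᵒᵖ (T.X n) ∧ Module.Finite Aᵐᵒᵖ (T.X n)) ∧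
  (∀ n : ℤ, n ≠ 0 → ∀ f : (Kq A).obj T ⟶ ((Kq A).obj T)⟦n⟧, f = 0) ∧
  (∀ W : Set (HomotopyCategory (Mod A) (ComplexShape.up ℤ)),
    (Kq A).obj T ∈ W →
    (∀ X Y, X ∈ W → Nonempty (X ≅ Y) → Y ∈ W) →
    (∀ X, X ∈ W → ∀ n : ℤ, X⟦n⟧ ∈ W) →
    (∀ Tr : Triangle (HomotopyCategory (Mod A) (ComplexShape.up ℤ)),
      (Tr ∈ distTriang (HomotopyCategory (Mod A) (ComplexShape.up ℤ))) → Tr.obj₁ ∈ W → Tr.obj₂ ∈ W → Tr.obj₃ ∈ W) →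
    (∀ X Y : HomotopyCategory (Mod A) (ComplexShape.up ℤ),
      (∃ (i : X ⟶ Y) (r : Y ⟶ X), i ≫ r = 𝟙 X) → Y ∈ W → X ∈ W) →
    ∀ K : CochainComplex (Mod A) ℤ,
      (∃ b : ℕ, ∀ n : ℤ, (b : ℤ) < |n| → IsZero (K.X n)) →
      (∀ n : ℤ, Module.Projective Aᵐᵒᵖ (K.X n) ∧ Module.Finite Aᵐᵒᵖ (K.X n)) →
      (Kq A).obj K ∈ W)

instance : HasFiniteBiproducts (CochainComplex (Mod A) ℤ) :=
  HasFiniteBiproducts.of_hasFiniteProducts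

/-- Dreyfus-Schmidt's definition of a perverse equivalence `F : D^b(A) → D^b(B)` relative to
filtrations `𝒮`, `𝒯` (given as increasing chains of index sets for the fixed complete
families `SA`, `SB` of simple modules, exhausted at stage `n`), a perversity function `π`,
and with induced bijection `β` of simple modules. -/
def IsPerverseWith {A B : Type} [Ring A] [Ring B] (F : Db A ⥤ Db B)
    {ZA ZB : Type} (SA : SimplesFamily Aᵐᵒᵖ ZA) (SB : SimplesFamily Bᵐᵒᵖ ZB)
    (n : ℕ) (𝒮 : ℕ → Set ZA) (𝒯 : ℕ → Set ZB) (π : ℕ → ℤ) (β : ZA ≃ ZB) : Prop :=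
  Monotone 𝒮 ∧ Monotone 𝒯 ∧ 𝒮 n = Set.univ ∧ 𝒯 n = Set.univ ∧
  (∀ (i : ℕ) (z : ZA), z ∈ 𝒮 i ↔ β z ∈ 𝒯 i) ∧
  ∀ (i : ℕ) (z : ZA), i ≤ n → z ∈ 𝒮 i → z ∉ below 𝒮 i →
    (∀ m : ℤ, m ≠ -π i →
      AllCompFactorsIn Bᵐᵒᵖ
        ((homologyFunctor (Mod B) m).obj ((F.obj (DbSingle A (SA.S z) (SA.fin z) 0)).obj))
        (SB.S '' below 𝒯 i)) ∧
    ∃ (L₁ L₂ : Submodule Bᵐᵒᵖ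
        ((homologyFunctor (Mod B) (-π i)).obj ((F.obj (DbSingle A (SA.S z) (SA.fin z) 0)).obj))),
      L₁ ≤ L₂ ∧
      AllCompFactorsIn Bᵐᵒᵖ (↥L₁) (SB.S '' below 𝒯 i) ∧
      AllCompFactorsIn Bᵐᵒᵖ
        (((homologyFunctor (Mod B) (-π i)).obj
            ((F.obj (DbSingle A (SA.S z) (SA.fin z) 0)).obj)) ⧸ L₂)
        (SB.S '' below 𝒯 i) ∧
      Nonempty ((↥L₂ ⧸ L₁.comap L₂.subtype) ≃ₗ[Bᵐᵒᵖ] ((SB.S (β z) : Type)))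

/-- A perverse equivalence: perverse relative to the given filtrations and function for some
induced bijection of simple modules. -/
def IsPerverse {A B : Type} [Ring A] [Ring B] (F : Db A ⥤ Db B)
    {ZA ZB : Type} (SA : SimplesFamily Aᵐᵒᵖ ZA) (SB : SimplesFamily Bᵐᵒᵖ ZB)
    (n : ℕ) (𝒮 : ℕ → Set ZA) (𝒯 : ℕ → Set ZB) (π : ℕ → ℤ) : Prop :=
  ∃ β : ZA ≃ ZB, IsPerverseWith F SA SB n 𝒮 𝒯 π β

/-- The perversity function of (simply) alternating perverse equivalences:
`π(0) = 0`, `π(1) = 1`, `π(2) = 0`. -/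
def altπ : ℕ → ℤ := fun i => if i = 1 then 1 else 0


section BrickAux

variable {R : Type} [Ring R]

lemma map_eq_bot_iff' {X Y : Type} [AddCommGroup X] [Module R X] [AddCommGroup Y] [Module R Y]
    (f : X →ₗ[R] Y) (p : Submodule R X) : Submodule.map f p = ⊥ ↔ p ≤ LinearMap.ker f := by
  constructor
  · intro h x hx
    have : f x ∈ Submodule.map f p := Submodule.mem_map_of_mem hx
    rw [h] at this
    simpa [LinearMap.mem_ker] using this
  · intro h
    rw [eq_bot_iff]
    rintro y ⟨x, hx, rfl⟩
    simpa using h hx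

lemma range_le_of_ne_bot {I S : Type} [AddCommGroup I] [Module R I]
    [AddCommGroup S] [Module R S] (hS : IsSimpleModule R S)
    (i : S →ₗ[R] I) (hinj : Function.Injective i)
    (hess : ∀ N : Submodule R I, N ⊓ LinearMap.range i = ⊥ → N = ⊥)
    {N : Submodule R I} (hN : N ≠ ⊥) : LinearMap.range i ≤ N := by
  have hsimple : IsSimpleModule R ↥(LinearMap.range i) := by
    haveI := hS
    exact IsSimpleModule.congr (LinearEquiv.ofInjective i hinj).symm
  have hatom : IsAtom (LinearMap.range i) := isSimpleModule_iff_isAtom.mp hsimple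
  have h2 : N ⊓ LinearMap.range i ≠ ⊥ := fun h => hN (hess N h)
  have h3 : N ⊓ LinearMap.range i = LinearMap.range i := by
    rcases lt_or_eq_of_le (inf_le_right : N ⊓ LinearMap.range i ≤ LinearMap.range i) with h | h
    · exact absurd (hatom.2 _ h) h2
    · exact h
  rw [← h3]; exact inf_le_left

lemma socle_eq_of_atom_le {M : Type} [AddCommGroup M] [Module R M]
    {W : Submodule R M} (hW : IsAtom W)
    (hle : ∀ N : Submodule R M, N ≠ ⊥ → W ≤ N) : socle R M = W := by
  apply le_antisymm
  · apply sSup_le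
    intro N hN
    have h1 : W ≤ N := hle N hN.1
    rcases lt_or_eq_of_le h1 with h | h
    · exact absurd (hN.2 _ h) hW.1
    · exact le_of_eq h.symm
  · exact le_sSup hW

lemma image_simple_equiv {X Y : Type} [AddCommGroup X] [Module R X]
    [AddCommGroup Y] [Module R Y] (f : X →ₗ[R] Y) (W : Submodule R X)
    (hW : IsSimpleModule R ↥W) (hne : Submodule.map f W ≠ ⊥) :
    Nonempty (↥W ≃ₗ[R] ↥(Submodule.map f W)) := by
  set g : ↥W →ₗ[R] ↥(Submodule.map f W) :=
    f.restrict (fun x hx => Submodule.mem_map_of_mem hx) with hg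
  have hsurj : Function.Surjective g := by
    rintro ⟨y, x, hx, rfl⟩
    exact ⟨⟨x, hx⟩, rfl⟩
  have hker : LinearMap.ker g = ⊥ := by
    haveI := hW
    rcases eq_bot_or_eq_top (LinearMap.ker g) with h | h
    · exact h
    · exfalso
      apply hne
      rw [eq_bot_iff]
      rintro y ⟨x, hx, rfl⟩
      have : (⟨x, hx⟩ : ↥W) ∈ LinearMap.ker g := h ▸ Submodule.mem_top
      have h2 : g ⟨x, hx⟩ = 0 := this
      have h3 : f x = 0 := congrArg Subtype.val h2
      simp [h3]
  exact ⟨LinearEquiv.ofBijective g ⟨LinearMap.ker_eq_bot.mp hker, hsurj⟩⟩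

lemma hom_zero_aux {X : Type} [AddCommGroup X] [Module R X] (W0 : Submodule R X)
    (S₀ : Set (ModuleCat.{0} R)) (hcf : AllCompFactorsIn R (X ⧸ W0) S₀)
    {Sy Iy : Type} [AddCommGroup Sy] [Module R Sy] [AddCommGroup Iy] [Module R Iy]
    (hSy : IsSimpleModule R Sy) (iy : Sy →ₗ[R] Iy) (hinj : Function.Injective iy)
    (hess : ∀ N : Submodule R Iy, N ⊓ LinearMap.range iy = ⊥ → N = ⊥)
    (Uy : Submodule R Iy) (hUyne : Uy ≠ ⊥)
    (hnot : ¬∃ T ∈ S₀, Nonempty (Sy ≃ₗ[R] ↥T))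
    (f : X →ₗ[R] ↥Uy) (hker : W0 ≤ LinearMap.ker f) : f = 0 := by
  by_contra hf
  set fbar : X ⧸ W0 →ₗ[R] ↥Uy := W0.liftQ f hker with hfbar
  have hrange : LinearMap.range fbar = LinearMap.range f := Submodule.range_liftQ _ _ _
  have hrne : LinearMap.range fbar ≠ ⊥ := by
    rw [hrange]; intro h; exact hf (LinearMap.range_eq_bot.mp h)
  have hmapne : Submodule.map Uy.subtype (LinearMap.range fbar) ≠ ⊥ := by
    intro h
    rw [map_eq_bot_iff', Submodule.ker_subtype, le_bot_iff] at h
    exact hrne h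
  have hiy_le : LinearMap.range iy ≤ Submodule.map Uy.subtype (LinearMap.range fbar) :=
    range_le_of_ne_bot hSy iy hinj hess hmapne
  set Ey : Submodule R ↥Uy := Submodule.comap Uy.subtype (LinearMap.range iy) with hEy
  have hEy_le : Ey ≤ LinearMap.range fbar := by
    have h1 : Ey ≤ Submodule.comap Uy.subtype (Submodule.map Uy.subtype (LinearMap.range fbar)) :=
      Submodule.comap_mono hiy_le
    rwa [Submodule.comap_map_eq, Submodule.ker_subtype, sup_bot_eq] at h1
  have hiyUy : LinearMap.range iy ≤ Uy := range_le_of_ne_bot hSy iy hinj hess hUyne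
  have hmapEy : Submodule.map Uy.subtype Ey = LinearMap.range iy := by
    rw [hEy, Submodule.map_comap_eq, Submodule.range_subtype]
    exact inf_eq_right.mpr hiyUy
  have eEy : ↥Ey ≃ₗ[R] Sy :=
    ((Submodule.equivMapOfInjective Uy.subtype (Submodule.injective_subtype Uy) Ey).trans
      (LinearEquiv.ofEq _ _ hmapEy)).trans (LinearEquiv.ofInjective iy hinj).symm
  set N : Submodule R (X ⧸ W0) := Submodule.comap fbar Ey with hN
  set g : ↥N →ₗ[R] ↥Ey := fbar.restrict (fun x hx => hx) with hgdef
  have hgsurj : Function.Surjective g := by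
    rintro ⟨e, he⟩
    obtain ⟨x, hx⟩ := hEy_le he
    exact ⟨⟨x, by simpa [hN, Submodule.mem_comap, hx] using he⟩,
      Subtype.ext (by simpa [hgdef, LinearMap.restrict_apply] using hx)⟩
  have e1 : (↥N ⧸ LinearMap.ker g) ≃ₗ[R] ↥Ey := g.quotKerEquivOfSurjective hgsurj
  have hsimple : IsSimpleModule R (↥N ⧸ LinearMap.ker g) := by
    haveI := hSy
    exact IsSimpleModule.congr (e1.trans eEy)
  obtain ⟨T, hT, ⟨e⟩⟩ := hcf N (LinearMap.ker g) hsimple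
  exact hnot ⟨T, hT, ⟨(eEy.symm.trans e1.symm).trans e⟩⟩

lemma socle_structure {S I : Type} [AddCommGroup S] [Module R S] [AddCommGroup I] [Module R I]
    (hS : IsSimpleModule R S) (i : S →ₗ[R] I) (hinj : Function.Injective i)
    (hess : ∀ N : Submodule R I, N ⊓ LinearMap.range i = ⊥ → N = ⊥)
    (U : Submodule R I) (hUne : U ≠ ⊥) :
    Submodule.map U.subtype (Submodule.comap U.subtype (LinearMap.range i)) = LinearMap.range i ∧
    Nonempty (↥(Submodule.comap U.subtype (LinearMap.range i)) ≃ₗ[R] S) ∧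
    (∀ N : Submodule R ↥U, N ≠ ⊥ → Submodule.comap U.subtype (LinearMap.range i) ≤ N) ∧
    socle R ↥U = Submodule.comap U.subtype (LinearMap.range i) := by
  have hle : LinearMap.range i ≤ U := range_le_of_ne_bot hS i hinj hess hUne
  have hmap : Submodule.map U.subtype (Submodule.comap U.subtype (LinearMap.range i)) =
      LinearMap.range i := by
    rw [Submodule.map_comap_eq, Submodule.range_subtype]
    exact inf_eq_right.mpr hle
  have eW : ↥(Submodule.comap U.subtype (LinearMap.range i)) ≃ₗ[R] S :=
    ((Submodule.equivMapOfInjective U.subtype (Submodule.injective_subtype U) _).trans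
      (LinearEquiv.ofEq _ _ hmap)).trans (LinearEquiv.ofInjective i hinj).symm
  have hsimpleW : IsSimpleModule R ↥(Submodule.comap U.subtype (LinearMap.range i)) := by
    haveI := hS
    exact IsSimpleModule.congr eW
  have hatom : IsAtom (Submodule.comap U.subtype (LinearMap.range i)) :=
    isSimpleModule_iff_isAtom.mp hsimpleW
  have hmin : ∀ N : Submodule R ↥U, N ≠ ⊥ →
      Submodule.comap U.subtype (LinearMap.range i) ≤ N := by
    intro N hN
    have hmapN : Submodule.map U.subtype N ≠ ⊥ := by
      intro h
      rw [map_eq_bot_iff', Submodule.ker_subtype, le_bot_iff] at h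
      exact hN h
    have h1 : LinearMap.range i ≤ Submodule.map U.subtype N :=
      range_le_of_ne_bot hS i hinj hess hmapN
    have h2 : Submodule.comap U.subtype (LinearMap.range i) ≤
        Submodule.comap U.subtype (Submodule.map U.subtype N) := Submodule.comap_mono h1
    rwa [Submodule.comap_map_eq, Submodule.ker_subtype, sup_bot_eq] at h2
  exact ⟨hmap, ⟨eW⟩, hmin, socle_eq_of_atom_le hatom hmin⟩

lemma simple_sub_eq_range {S I : Type} [AddCommGroup S] [Module R S] [AddCommGroup I] [Module R I]
    (hS : IsSimpleModule R S) (i : S →ₗ[R] I) (hinj : Function.Injective i)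
    (hess : ∀ N : Submodule R I, N ⊓ LinearMap.range i = ⊥ → N = ⊥)
    (U : Submodule R I) (N : Submodule R ↥U) (hsimple : IsSimpleModule R ↥N) (hNne : N ≠ ⊥) :
    Submodule.map U.subtype N = LinearMap.range i := by
  have hmapne : Submodule.map U.subtype N ≠ ⊥ := by
    intro h
    rw [map_eq_bot_iff', Submodule.ker_subtype, le_bot_iff] at h
    exact hNne h
  have h1 : LinearMap.range i ≤ Submodule.map U.subtype N :=
    range_le_of_ne_bot hS i hinj hess hmapne
  have hsimpleM : IsSimpleModule R ↥(Submodule.map U.subtype N) := by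
    haveI := hsimple
    exact IsSimpleModule.congr
      (Submodule.equivMapOfInjective U.subtype (Submodule.injective_subtype U) N).symm
  have hatom : IsAtom (Submodule.map U.subtype N) := isSimpleModule_iff_isAtom.mp hsimpleM
  have hrne : LinearMap.range i ≠ ⊥ := by
    intro h
    rw [LinearMap.range_eq_bot] at h
    haveI := hS
    haveI : Nontrivial S := IsSimpleModule.nontrivial R S
    obtain ⟨s, hs⟩ := exists_ne (0 : S)
    exact hs (hinj (by simp [h]))
  rcases lt_or_eq_of_le h1 with h | h
  · exact absurd (hatom.2 _ h) hrne
  · exact h.symm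

lemma sub_ne_bot_of_socle_equiv {M : Type} [AddCommGroup M] [Module R M]
    (U : Submodule R M) {S : Type} [AddCommGroup S] [Module R S] [Nontrivial S]
    (e : ↥(socle R ↥U) ≃ₗ[R] S) : U ≠ ⊥ := by
  haveI : Nontrivial ↥(socle R ↥U) := e.toEquiv.nontrivial
  obtain ⟨w, hw⟩ := exists_ne (0 : ↥(socle R ↥U))
  refine (Submodule.ne_bot_iff _).mpr ⟨(w : ↥U), (w : ↥U).2, fun h => hw ?_⟩
  exact Subtype.ext (Subtype.ext h)

end BrickAux

/-- **Universal extensions by a set of simples form bricks.**  Let `S₀` be a set of simple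
right `A`-modules and `S_x`, `S_y` simple modules whose classes are not in `S₀`.  Let `U_x`
be the largest submodule of the injective hull of `S_x` with socle `S_x` and all other
composition factors in `S₀` (the universal extension of `S_x` by `S₀`), similarly `U_y`.
Then `Hom_A(U_x, U_y) = 0` if `S_x ≇ S_y`, while `dim_k End_A(U_x) = 1`; in particular every
nonzero endomorphism of `U_x` is an isomorphism. -/
theorem statement_3 (k : Type) [Field k] [IsAlgClosed k]
    (A : Type) [Ring A] [Algebra k A] [FiniteDimensional k A]
    (S₀ : Set (Mod A)) (hS₀ : ∀ T ∈ S₀, IsSimpleModule Aᵐᵒᵖ (T : Type))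
    (Sx Sy : Mod A) (hSx : IsSimpleModule Aᵐᵒᵖ Sx) (hSy : IsSimpleModule Aᵐᵒᵖ Sy)
    (hxnot : ¬∃ T ∈ S₀, Nonempty ((Sx : Type) ≃ₗ[Aᵐᵒᵖ] (T : Type)))
    (hynot : ¬∃ T ∈ S₀, Nonempty ((Sy : Type) ≃ₗ[Aᵐᵒᵖ] (T : Type)))
    (Ix Iy : Mod A)
    (ix : (Sx : Type) →ₗ[Aᵐᵒᵖ] (Ix : Type)) (hIx : IsInjectiveHull Aᵐᵒᵖ Ix Sx ix)
    (iy : (Sy : Type) →ₗ[Aᵐᵒᵖ] (Iy : Type)) (hIy : IsInjectiveHull Aᵐᵒᵖ Iy Sy iy)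
    (Ux : Submodule Aᵐᵒᵖ Ix)
    (hUx : Nonempty ((↥(socle Aᵐᵒᵖ ↥Ux)) ≃ₗ[Aᵐᵒᵖ] (Sx : Type)) ∧
      AllCompFactorsIn Aᵐᵒᵖ (↥Ux ⧸ socle Aᵐᵒᵖ ↥Ux) S₀)
    (hUxmax : ∀ U : Submodule Aᵐᵒᵖ Ix,
      (Nonempty ((↥(socle Aᵐᵒᵖ ↥U)) ≃ₗ[Aᵐᵒᵖ] (Sx : Type)) ∧
        AllCompFactorsIn Aᵐᵒᵖ (↥U ⧸ socle Aᵐᵒᵖ ↥U) S₀) → U ≤ Ux)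
    (Uy : Submodule Aᵐᵒᵖ Iy)
    (hUy : Nonempty ((↥(socle Aᵐᵒᵖ ↥Uy)) ≃ₗ[Aᵐᵒᵖ] (Sy : Type)) ∧
      AllCompFactorsIn Aᵐᵒᵖ (↥Uy ⧸ socle Aᵐᵒᵖ ↥Uy) S₀)
    (hUymax : ∀ U : Submodule Aᵐᵒᵖ Iy,
      (Nonempty ((↥(socle Aᵐᵒᵖ ↥U)) ≃ₗ[Aᵐᵒᵖ] (Sy : Type)) ∧
        AllCompFactorsIn Aᵐᵒᵖ (↥U ⧸ socle Aᵐᵒᵖ ↥U) S₀) → U ≤ Uy) :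
    (¬Nonempty ((Sx : Type) ≃ₗ[Aᵐᵒᵖ] (Sy : Type)) →
      ∀ f : ↥Ux →ₗ[Aᵐᵒᵖ] ↥Uy, f = 0) ∧
    Function.Bijective (fun c : k => centralSmul k (A := A) c ↥Ux) ∧
    (∀ f : ↥Ux →ₗ[Aᵐᵒᵖ] ↥Ux, f ≠ 0 → Function.Bijective f) := by
  classical
  obtain ⟨hIxi, hixinj, hixess⟩ := hIx
  obtain ⟨hIyi, hiyinj, hiyess⟩ := hIy
  obtain ⟨⟨ex⟩, hcfx⟩ := hUx
  obtain ⟨⟨ey⟩, hcfy⟩ := hUy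
  haveI := hSx
  haveI := hSy
  haveI hSxnt : Nontrivial (Sx : Type) := IsSimpleModule.nontrivial Aᵐᵒᵖ (Sx : Type)
  haveI hSynt : Nontrivial (Sy : Type) := IsSimpleModule.nontrivial Aᵐᵒᵖ (Sy : Type)
  have hUxne : Ux ≠ ⊥ := sub_ne_bot_of_socle_equiv Ux ex
  have hUyne : Uy ≠ ⊥ := sub_ne_bot_of_socle_equiv Uy ey
  set Wx : Submodule Aᵐᵒᵖ ↥Ux := Submodule.comap Ux.subtype (LinearMap.range ix) with hWxdef
  obtain ⟨hmapWx, ⟨eWx⟩, hWxmin, hsocx⟩ := socle_structure hSx ix hixinj hixess Ux hUxne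
  have hsimpleWx : IsSimpleModule Aᵐᵒᵖ ↥Wx := by
    haveI := hSx
    exact IsSimpleModule.congr eWx
  have hatomWx : IsAtom Wx := isSimpleModule_iff_isAtom.mp hsimpleWx
  -- Schur: every endomorphism of Ux is a central scalar
  have schur : ∀ f : ↥Ux →ₗ[Aᵐᵒᵖ] ↥Ux, ∃ c : k, f = centralSmul k c ↥Ux := by
    intro f
    -- f preserves Wx
    have hstable : Submodule.map f Wx ≤ Wx := by
      by_cases hbot : Submodule.map f Wx = ⊥
      · rw [hbot]; exact bot_le
      · have hsimpleIm : IsSimpleModule Aᵐᵒᵖ ↥(Submodule.map f Wx) := by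
          obtain ⟨e⟩ := image_simple_equiv f Wx hsimpleWx hbot
          haveI := hsimpleWx
          exact IsSimpleModule.congr e.symm
        have heq : Submodule.map Ux.subtype (Submodule.map f Wx) = LinearMap.range ix :=
          simple_sub_eq_range hSx ix hixinj hixess Ux _ hsimpleIm hbot
        have heq2 : Submodule.map Ux.subtype (Submodule.map f Wx) =
            Submodule.map Ux.subtype Wx := by rw [heq, hmapWx]
        exact le_of_eq
          (Submodule.map_injective_of_injective (Submodule.injective_subtype Ux) heq2)
    set fW : ↥Wx →ₗ[Aᵐᵒᵖ] ↥Wx :=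
      f.restrict (fun x hx => hstable (Submodule.mem_map_of_mem hx)) with hfWdef
    letI : Module k ↥Wx := Module.compHom _ (algebraMap k Aᵐᵒᵖ)
    have hsmul : ∀ (c : k) (v : ↥Wx), c • v = (algebraMap k Aᵐᵒᵖ c) • v := fun _ _ => rfl
    haveI : IsScalarTower k Aᵐᵒᵖ ↥Wx := by
      constructor
      intro c a v
      show (c • a) • v = (algebraMap k Aᵐᵒᵖ c) • (a • v)
      rw [Algebra.smul_def, mul_smul]
    haveI : Module.Finite Aᵐᵒᵖ (Sx : Type) := simpleModuleFinite (R := Aᵐᵒᵖ) (M := (Sx : Type)) hSx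
    haveI : Module.Finite Aᵐᵒᵖ ↥Wx := Module.Finite.equiv eWx.symm
    haveI : Module.Finite k Aᵐᵒᵖ := by
      haveI : Module.Finite k A := inferInstance
      exact Module.Finite.equiv (MulOpposite.opLinearEquiv k : A ≃ₗ[k] Aᵐᵒᵖ)
    haveI : Module.Finite k ↥Wx := Module.Finite.trans Aᵐᵒᵖ ↥Wx
    haveI : Nontrivial ↥Wx := eWx.toEquiv.nontrivial
    set fk : Module.End k ↥Wx :=
      { toFun := fW
        map_add' := fun a b => map_add fW a b
        map_smul' := fun c v => fW.map_smul (algebraMap k Aᵐᵒᵖ c) v } with hfkdef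
    obtain ⟨c, hc⟩ := Module.End.exists_eigenvalue fk
    obtain ⟨v, hv⟩ := hc.exists_hasEigenvector
    have hfkv : fk v = c • v := Module.End.mem_eigenspace_iff.mp hv.1
    refine ⟨c, ?_⟩
    set h : ↥Ux →ₗ[Aᵐᵒᵖ] ↥Ux := f - centralSmul k c ↥Ux with hhdef
    have hvker : (v : ↥Ux) ∈ LinearMap.ker h := by
      rw [LinearMap.mem_ker, hhdef]
      have h1 : f (v : ↥Ux) = (algebraMap k Aᵐᵒᵖ c) • (v : ↥Ux) := by
        have h2 : (fW v : ↥Ux) = f (v : ↥Ux) := rfl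
        have h3 : fk v = fW v := rfl
        have h4 : (((algebraMap k Aᵐᵒᵖ c) • v : ↥Wx) : ↥Ux) =
            (algebraMap k Aᵐᵒᵖ c) • (v : ↥Ux) := rfl
        rw [← h2, ← h3, hfkv, hsmul, h4]
      simp only [LinearMap.sub_apply]
      rw [h1]
      show (algebraMap k Aᵐᵒᵖ c) • (v : ↥Ux) - (algebraMap k Aᵐᵒᵖ c) • (v : ↥Ux) = 0
      exact sub_self _
    have hKne : Wx ⊓ LinearMap.ker h ≠ ⊥ := by
      refine (Submodule.ne_bot_iff _).mpr ⟨(v : ↥Ux), ⟨v.2, hvker⟩, fun h0 => hv.2 ?_⟩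
      exact Subtype.ext h0
    have hWker : Wx ≤ LinearMap.ker h := by
      have h1 : Wx ⊓ LinearMap.ker h = Wx := by
        rcases lt_or_eq_of_le (inf_le_left : Wx ⊓ LinearMap.ker h ≤ Wx) with h2 | h2
        · exact absurd (hatomWx.2 _ h2) hKne
        · exact h2
      rw [← h1]; exact inf_le_right
    have hzero : h = 0 := by
      refine hom_zero_aux (socle Aᵐᵒᵖ ↥Ux) S₀ hcfx hSx ix hixinj hixess Ux hUxne hxnot h ?_
      rw [hsocx]; exact hWker
    have := sub_eq_zero.mp (hhdef ▸ hzero)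
    exact this
  refine ⟨?_, ⟨?_, ?_⟩, ?_⟩
  · -- Hom(Ux, Uy) = 0 when Sx ≇ Sy
    intro hneiso f
    by_cases hbot : Submodule.map f Wx = ⊥
    · refine hom_zero_aux (socle Aᵐᵒᵖ ↥Ux) S₀ hcfx hSy iy hiyinj hiyess Uy hUyne hynot f ?_
      rw [hsocx]
      rw [map_eq_bot_iff'] at hbot
      exact hbot
    · exfalso
      obtain ⟨eim⟩ := image_simple_equiv f Wx hsimpleWx hbot
      have hsimpleIm : IsSimpleModule Aᵐᵒᵖ ↥(Submodule.map f Wx) := by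
        haveI := hsimpleWx
        exact IsSimpleModule.congr eim.symm
      have heq : Submodule.map Uy.subtype (Submodule.map f Wx) = LinearMap.range iy :=
        simple_sub_eq_range hSy iy hiyinj hiyess Uy _ hsimpleIm hbot
      refine hneiso ⟨(((eWx.symm.trans eim).trans
        (Submodule.equivMapOfInjective Uy.subtype (Submodule.injective_subtype Uy) _)).trans
        (LinearEquiv.ofEq _ _ heq)).trans (LinearEquiv.ofInjective iy hiyinj).symm⟩
  · -- injectivity of c ↦ centralSmul c
    intro c c' hcc
    by_contra hne
    haveI : Nontrivial ↥Wx := eWx.toEquiv.nontrivial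
    obtain ⟨v, hv⟩ := exists_ne (0 : ↥Wx)
    have h1 : (algebraMap k Aᵐᵒᵖ c) • (v : ↥Ux) = (algebraMap k Aᵐᵒᵖ c') • (v : ↥Ux) := by
      have := congrArg (fun g : ↥Ux →ₗ[Aᵐᵒᵖ] ↥Ux => g (v : ↥Ux)) hcc
      exact this
    have h2 : (algebraMap k Aᵐᵒᵖ (c - c')) • (v : ↥Ux) = 0 := by
      rw [map_sub, sub_smul, h1, sub_self]
    have h3 : (v : ↥Ux) = 0 := by
      have h4 := congrArg (fun m => (algebraMap k Aᵐᵒᵖ (c - c')⁻¹) • m) h2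
      simp only [smul_zero] at h4
      rwa [smul_smul, ← map_mul, inv_mul_cancel₀ (sub_ne_zero.mpr hne), map_one, one_smul] at h4
    exact hv (Subtype.ext h3)
  · -- surjectivity of c ↦ centralSmul c
    intro f
    obtain ⟨c, hc⟩ := schur f
    exact ⟨c, hc.symm⟩
  · -- nonzero endomorphisms are bijective
    intro f hf
    obtain ⟨c, hc⟩ := schur f
    have hcne : c ≠ 0 := by
      intro h0
      apply hf
      rw [hc, h0]
      refine LinearMap.ext fun m => ?_
      show (algebraMap k Aᵐᵒᵖ (0 : k)) • m = 0
      rw [map_zero, zero_smul]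
    have hl : ∀ m : ↥Ux, (algebraMap k Aᵐᵒᵖ c⁻¹) • ((algebraMap k Aᵐᵒᵖ c) • m) = m := by
      intro m
      rw [smul_smul, ← map_mul, inv_mul_cancel₀ hcne, map_one, one_smul]
    have hr : ∀ m : ↥Ux, (algebraMap k Aᵐᵒᵖ c) • ((algebraMap k Aᵐᵒᵖ c⁻¹) • m) = m := by
      intro m
      rw [smul_smul, ← map_mul, mul_inv_cancel₀ hcne, map_one, one_smul]
    have happ : ∀ m : ↥Ux, f m = (algebraMap k Aᵐᵒᵖ c) • m := by
      intro m
      rw [hc]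
      rfl
    constructor
    · intro a b hab
      rw [happ, happ] at hab
      calc a = (algebraMap k Aᵐᵒᵖ c⁻¹) • ((algebraMap k Aᵐᵒᵖ c) • a) := (hl a).symm
      _ = (algebraMap k Aᵐᵒᵖ c⁻¹) • ((algebraMap k Aᵐᵒᵖ c) • b) := by rw [hab]
      _ = b := hl b
    · intro y
      exact ⟨(algebraMap k Aᵐᵒᵖ c⁻¹) • y, by rw [happ]; exact hr y⟩


end PervSL2
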